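/- arXiv:1803.05680 — 2 statements merged into one kernel-verified Lean document; each statement's English description precedes it below -/
import Mathlib

section
/- Let X be a real Banach space and let φ ∈ C¹(X,ℝ) be bounded below, with m = inf_{u∈X} φ(u). Then there exists a sequence (u_n) ⊆ X such that φ(u_n) → m and (1+‖u_n‖)‖φ'(u_n)‖_{X*} → 0 as n → ∞. -/
open Filter Topology

/-- Ekeland variational principle (weak form, for continuous functions on a
complete metric space). -/
theorem ekeland {Y : Type*} [MetricSpace Y] [CompleteSpace Y]
    (φ : Y → ℝ) (hc : Continuous φ) {M : ℝ} (hM : ∀ x, M ≤ φ x)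
    {c : ℝ} (hcpos : 0 < c) (v : Y) :
    ∃ u : Y, φ u + c * dist u v ≤ φ v ∧ ∀ w, φ u ≤ φ w + c * dist w u := by
  classical
  set S : Y → Set Y := fun u => {w | φ w + c * dist w u ≤ φ u} with hS
  have hmemS : ∀ u, u ∈ S u := by intro u; simp [hS]
  have hne : ∀ u, (S u).Nonempty := fun u => ⟨u, hmemS u⟩
  have hbdd : ∀ u, BddBelow (φ '' S u) := fun u =>
    ⟨M, by rintro x ⟨w, -, rfl⟩; exact hM w⟩
  have htrans : ∀ u u' w, u' ∈ S u → w ∈ S u' → w ∈ S u := by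
    intro u u' w hu' hw
    simp only [hS, Set.mem_setOf_eq] at hu' hw ⊢
    have ht := dist_triangle w u' u
    nlinarith
  -- choice of next point
  have hnext : ∀ u : Y, ∀ n : ℕ, ∃ w ∈ S u,
      φ w < sInf (φ '' S u) + (1/2) ^ n := by
    intro u n
    have hpos : (0:ℝ) < (1/2) ^ n := by positivity
    obtain ⟨y, hy, hy2⟩ := Real.lt_sInf_add_pos ((hne u).image φ) hpos
    obtain ⟨w, hw, rfl⟩ := hy
    exact ⟨w, hw, hy2⟩
  choose g hg1 hg2 using hnext
  set seq : ℕ → Y := fun n => Nat.rec v (fun n u => g u n) n with hseq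
  have hseq_succ : ∀ n, seq (n + 1) = g (seq n) n := fun n => rfl
  have hstep : ∀ n, seq (n + 1) ∈ S (seq n) := fun n => hg1 (seq n) n
  have hstep2 : ∀ n, φ (seq (n+1)) < sInf (φ '' S (seq n)) + (1/2) ^ n :=
    fun n => hg2 (seq n) n
  -- later points are in earlier S sets
  have hmem : ∀ n k, seq (n + k) ∈ S (seq n) := by
    intro n k
    induction k with
    | zero => exact hmemS _
    | succ k ih =>
      exact htrans _ _ _ ih (by rw [show n + (k+1) = (n+k) + 1 from rfl]; exact hstep (n+k))
  have hmem' : ∀ {n p : ℕ}, n ≤ p → seq p ∈ S (seq n) := by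
    intro n p h
    obtain ⟨k, rfl⟩ := Nat.exists_eq_add_of_le h
    exact hmem n k
  have hanti : ∀ {n p : ℕ}, n ≤ p → φ (seq p) ≤ φ (seq n) := by
    intro n p h
    have := hmem' h
    have hd : 0 ≤ c * dist (seq p) (seq n) := by positivity
    simp only [hS, Set.mem_setOf_eq] at this
    linarith
  -- φ ∘ seq converges
  have hmono : Antitone fun n => φ (seq n) := fun n p h => hanti h
  obtain ⟨L, hL⟩ : ∃ L, Tendsto (fun n => φ (seq n)) atTop (𝓝 L) :=
    ⟨_, tendsto_atTop_ciInf hmono ⟨M, by rintro x ⟨n, rfl⟩; exact hM _⟩⟩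
  have hLle : ∀ n, L ≤ φ (seq n) := fun n =>
    le_of_tendsto hL (eventually_atTop.2 ⟨n, fun p hp => hanti hp⟩)
  -- Cauchy
  have hcauchy : CauchySeq seq := by
    apply cauchySeq_of_le_tendsto_0 (fun n => (φ (seq n) - L) / c)
    · intro n p N hn hp
      rcases le_total n p with h | h
      · have := hmem' h
        simp only [hS, Set.mem_setOf_eq] at this
        rw [dist_comm]
        have h1 : dist (seq p) (seq n) ≤ (φ (seq n) - φ (seq p)) / c := by
          rw [le_div_iff₀ hcpos]; linarith [this]
        refine h1.trans ?_
        gcongr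
        · exact hanti hn
        · exact hLle p
      · have := hmem' h
        simp only [hS, Set.mem_setOf_eq] at this
        have h1 : dist (seq n) (seq p) ≤ (φ (seq p) - φ (seq n)) / c := by
          rw [le_div_iff₀ hcpos]; linarith [this]
        refine h1.trans ?_
        gcongr
        · exact hanti hp
        · exact hLle n
    · have : Tendsto (fun n => (φ (seq n) - L) / c) atTop (𝓝 ((L - L)/c)) :=
        ((hL.sub tendsto_const_nhds).div_const c)
      simpa using this
  obtain ⟨u, hu⟩ := cauchySeq_tendsto_of_complete hcauchy
  -- u is in every S (seq n)
  have hSclosed : ∀ w, IsClosed (S w) :=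
    fun w => isClosed_le (by continuity) continuous_const
  have huS : ∀ n, u ∈ S (seq n) := by
    intro n
    refine (hSclosed (seq n)).mem_of_tendsto (hu.comp (tendsto_add_atTop_nat n)) ?_
    exact Eventually.of_forall fun k => hmem' (Nat.le_add_left n k)
  refine ⟨u, ?_, ?_⟩
  · have := huS 0; simpa [hS, hseq] using this
  · intro w
    by_contra hcon
    push_neg at hcon
    -- w ∈ S u, hence in all S (seq n)
    have hwSu : w ∈ S u := by
      simp only [hS, Set.mem_setOf_eq]; exact hcon.le
    have hwS : ∀ n, w ∈ S (seq n) := fun n => htrans _ _ _ (huS n) hwSu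
    have hkey : ∀ n, c * dist w (seq (n+1)) ≤ (1/2) ^ n := by
      intro n
      have h1 : sInf (φ '' S (seq n)) ≤ φ w :=
        csInf_le (hbdd _) ⟨w, hwS n, rfl⟩
      have h2 := hstep2 n
      have h3 := hwS (n+1)
      simp only [hS, Set.mem_setOf_eq] at h3
      linarith
    have hdist : Tendsto (fun n => dist w (seq (n+1))) atTop (𝓝 (dist w u)) :=
      (continuous_const.dist continuous_id).continuousAt.tendsto.comp
        (hu.comp (tendsto_add_atTop_nat 1)) |>.congr fun n => rfl
    have : c * dist w u ≤ 0 := by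
      have h0 : Tendsto (fun n : ℕ => ((1:ℝ)/2) ^ n) atTop (𝓝 0) :=
        tendsto_pow_atTop_nhds_zero_of_lt_one (by norm_num) (by norm_num)
      have := le_of_tendsto_of_tendsto' (tendsto_const_nhds.mul hdist) h0 hkey
      simpa using this
    have hwu : dist w u = 0 := by nlinarith [dist_nonneg (x := w) (y := u)]
    obtain rfl : w = u := dist_eq_zero.mp hwu
    simp [dist_self] at hcon

theorem fderiv_bound {X : Type*} [NormedAddCommGroup X] [NormedSpace ℝ X]
    (φ : X → ℝ) (hφ : Differentiable ℝ φ) (u : X) {c : ℝ} (hc : 0 ≤ c)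
    (h : ∀ w, φ u ≤ φ w + c * dist w u) : ‖fderiv ℝ φ u‖ ≤ c := by
  set f := fderiv ℝ φ u with hf
  refine ContinuousLinearMap.opNorm_le_bound f hc ?_
  have key : ∀ v : X, -(c * ‖v‖) ≤ f v := by
    intro v
    have hline : HasDerivAt (fun t : ℝ => u + t • v) v 0 := by
      simpa using ((hasDerivAt_id (0:ℝ)).smul_const v).const_add u
    have hd : HasDerivAt (fun t : ℝ => φ (u + t • v)) (f v) 0 := by
      have h0 : HasFDerivAt φ f (u + (0:ℝ) • v) := by
        simpa using (hφ u).hasFDerivAt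
      exact h0.comp_hasDerivAt 0 hline
    have hslope : Tendsto (fun t : ℝ => (φ (u + t • v) - φ u) / t) (𝓝[>] 0) (𝓝 (f v)) := by
      have := hd.hasDerivWithinAt (s := Set.Ioi (0:ℝ))
      have h2 := (hasDerivWithinAt_iff_tendsto_slope.mp this)
      have h3 : Set.Ioi (0:ℝ) \ {0} = Set.Ioi 0 := by simp
      rw [h3] at h2
      refine h2.congr fun t => ?_
      simp [slope_def_field, div_eq_inv_mul]
    refine ge_of_tendsto hslope ?_
    filter_upwards [self_mem_nhdsWithin] with t ht
    have ht' : (0:ℝ) < t := ht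
    have := h (u + t • v)
    have hdist : dist (u + t • v) u = t * ‖v‖ := by
      simp [dist_eq_norm, norm_smul, abs_of_pos ht']
    rw [hdist] at this
    rw [le_div_iff₀ ht']
    nlinarith
  intro v
  rw [Real.norm_eq_abs, abs_le]
  constructor
  · linarith [key v]
  · have := key (-v)
    simp at this
    linarith

/-- A `C¹` functional bounded below admits a Cerami-type almost-critical minimizing
sequence: `φ(uₙ) → m = inf φ` and `(1+‖uₙ‖)‖φ'(uₙ)‖ → 0`. -/
theorem stmt1 {X : Type*} [NormedAddCommGroup X] [NormedSpace ℝ X] [CompleteSpace X]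
    (φ : X → ℝ) (hφ : ContDiff ℝ 1 φ)
    (hbdd : BddBelow (Set.range φ))
    (m : ℝ) (hm : m = ⨅ u : X, φ u) :
    ∃ u : ℕ → X,
      Tendsto (fun n => φ (u n)) atTop (𝓝 m) ∧
      Tendsto (fun n => (1 + ‖u n‖) * ‖fderiv ℝ φ (u n)‖) atTop (𝓝 0) := by
  have hdiff : Differentiable ℝ φ := hφ.differentiable one_ne_zero
  have hcont : Continuous φ := hdiff.continuous
  have hmle : ∀ x, m ≤ φ x := by
    intro x; rw [hm]; exact ciInf_le hbdd x
  have key : ∀ ε : ℝ, 0 < ε → ε ≤ 1 →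
      ∃ u : X, m ≤ φ u ∧ φ u ≤ m + ε^2 ∧ (1 + ‖u‖) * ‖fderiv ℝ φ u‖ ≤ 2*ε := by
    intro ε hε hε1
    have hε2 : (0:ℝ) < ε^2 := by positivity
    obtain ⟨v, hv⟩ : ∃ v : X, φ v < m + ε^2 := by
      have : (⨅ u : X, φ u) < m + ε^2 := by rw [← hm]; linarith
      exact exists_lt_of_ciInf_lt this
    have hvpos : (0:ℝ) < 1 + ‖v‖ := by positivity
    set c : ℝ := ε / (1 + ‖v‖) with hc
    have hcpos : 0 < c := by positivity
    obtain ⟨u, hu1, hu2⟩ := ekeland φ hcont hmle hcpos v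
    have hd : 0 ≤ c * dist u v := by positivity
    have hφu : φ u ≤ m + ε^2 := by linarith [hu1, hv.le]
    have hdist : c * dist u v ≤ ε^2 := by linarith [hmle u, hu1, hv.le]
    have hdist' : dist u v ≤ ε * (1 + ‖v‖) := by
      rw [← le_div_iff₀' hcpos] at hdist
      calc dist u v ≤ ε^2 / c := hdist
        _ = ε * (1 + ‖v‖) := by rw [hc]; field_simp
    have hnorm : ‖u‖ ≤ ‖v‖ + ε * (1 + ‖v‖) := by
      calc ‖u‖ ≤ ‖v‖ + dist u v := by
            rw [dist_eq_norm]
            have := norm_sub_norm_le u v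
            linarith [norm_sub_norm_le u v]
        _ ≤ ‖v‖ + ε * (1 + ‖v‖) := by linarith
    have hfb : ‖fderiv ℝ φ u‖ ≤ c := fderiv_bound φ hdiff u hcpos.le hu2
    refine ⟨u, hmle u, hφu, ?_⟩
    have h1u : (0:ℝ) ≤ 1 + ‖u‖ := by positivity
    calc (1 + ‖u‖) * ‖fderiv ℝ φ u‖ ≤ (1 + ‖u‖) * c := by gcongr
      _ ≤ ((1 + ε) * (1 + ‖v‖)) * c := by
          have : 1 + ‖u‖ ≤ (1 + ε) * (1 + ‖v‖) := by nlinarith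
          gcongr
      _ = (1 + ε) * ε := by rw [hc]; field_simp
      _ ≤ 2 * ε := by nlinarith
  have hεpos : ∀ n : ℕ, (0:ℝ) < 1/(n+1) := by intro n; positivity
  have hεle : ∀ n : ℕ, (1:ℝ)/(n+1) ≤ 1 := by
    intro n
    rw [div_le_one (by positivity)]
    exact le_add_of_nonneg_left (Nat.cast_nonneg n)
  choose u hu1 hu2 hu3 using fun n : ℕ => key (1/(n+1)) (hεpos n) (hεle n)
  refine ⟨u, ?_, ?_⟩
  · have hε0 : Tendsto (fun n : ℕ => m + (1/(n+1:ℝ))^2) atTop (𝓝 m) := by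
      have := tendsto_const_nhds.add ((tendsto_one_div_add_atTop_nhds_zero_nat).pow 2)
        (f := fun _ : ℕ => m) (x := atTop)
      simpa using this
    exact tendsto_of_tendsto_of_tendsto_of_le_of_le tendsto_const_nhds hε0 hu1 hu2
  · have h2ε : Tendsto (fun n : ℕ => 2 * (1/(n+1:ℝ))) atTop (𝓝 0) := by
      have := tendsto_const_nhds.mul tendsto_one_div_add_atTop_nhds_zero_nat
        (f := fun _ : ℕ => (2:ℝ)) (x := atTop)
      simpa using this
    exact tendsto_of_tendsto_of_tendsto_of_le_of_le tendsto_const_nhds h2ε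
      (fun n => by positivity) hu3
end

section
/- (Noncritical interval theorem.) Let X be a real Banach space and φ ∈ C¹(X,ℝ). If φ satisfies the Cerami condition at every level c ∈ [a,b] and K_φ ∩ φ⁻¹([a,b]) = ∅, then the sublevel set φ^a is a strong deformation retract of the sublevel set φ^b, i.e. there is a continuous map h : [0,1] × φ^b → φ^b with h(0,u) = u for all u ∈ φ^b, h(1,φ^b) ⊆ φ^a, and h(t,u) = u for all u ∈ φ^a and all t ∈ [0,1]. -/
open Filter Topology Set Metric

section Stmt3Aux

set_option linter.unusedSectionVars false

variable {X : Type*} [NormedAddCommGroup X] [NormedSpace ℝ X] [CompleteSpace X]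

lemma stmt3_deltaBound (φ : X → ℝ) (hφ : ContDiff ℝ 1 φ) (a b : ℝ)
    (hCerami : ∀ c : ℝ, a ≤ c → c ≤ b → ∀ u : ℕ → X,
      Tendsto (fun n => φ (u n)) atTop (𝓝 c) →
      Tendsto (fun n => (1 + ‖u n‖) * ‖fderiv ℝ φ (u n)‖) atTop (𝓝 0) →
      ∃ (v : X) (σ : ℕ → ℕ), StrictMono σ ∧ Tendsto (fun n => u (σ n)) atTop (𝓝 v))
    (hnocrit : ∀ u : X, fderiv ℝ φ u = 0 → ¬(a ≤ φ u ∧ φ u ≤ b)) :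
    ∃ δ : ℝ, 0 < δ ∧ δ ≤ 1 ∧ ∀ u : X, a ≤ φ u → φ u ≤ b →
      δ ≤ (1 + ‖u‖) * ‖fderiv ℝ φ u‖ := by
  by_contra hcon
  push_neg at hcon
  -- for each n, get u n violating the bound with δ = min 1 (1/(n+1))
  have hex : ∀ n : ℕ, ∃ u : X, a ≤ φ u ∧ φ u ≤ b ∧
      (1 + ‖u‖) * ‖fderiv ℝ φ u‖ < 1 / (n + 1 : ℝ) := by
    intro n
    have h1 : (0:ℝ) < min 1 (1 / (n + 1 : ℝ)) := by positivity
    obtain ⟨u, hu1, hu2, hu3⟩ := hcon (min 1 (1 / (n + 1 : ℝ))) h1 (min_le_left _ _)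
    exact ⟨u, hu1, hu2, lt_of_lt_of_le hu3 (min_le_right _ _)⟩
  choose u hu1 hu2 hu3 using hex
  have hmem : ∀ n, φ (u n) ∈ Set.Icc a b := fun n => ⟨hu1 n, hu2 n⟩
  obtain ⟨c, hc, σ1, hσ1, hφσ1⟩ := isCompact_Icc.tendsto_subseq hmem
  have hsmall : Tendsto (fun n => (1 + ‖u (σ1 n)‖) * ‖fderiv ℝ φ (u (σ1 n))‖) atTop (𝓝 0) := by
    apply squeeze_zero (fun n => by positivity)
      (fun n => (hu3 (σ1 n)).le.trans (by
        have hle : n ≤ σ1 n := hσ1.le_apply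
        have h1 : (n:ℝ) + 1 ≤ (σ1 n : ℝ) + 1 := by exact_mod_cast Nat.succ_le_succ hle
        exact one_div_le_one_div_of_le (by positivity) h1))
    exact tendsto_one_div_add_atTop_nhds_zero_nat
  obtain ⟨v, σ2, hσ2, hconv⟩ := hCerami c hc.1 hc.2 (fun n => u (σ1 n)) hφσ1 hsmall
  have hφv : φ v = c := by
    have h1 : Tendsto (fun n => φ (u (σ1 (σ2 n)))) atTop (𝓝 (φ v)) :=
      (hφ.continuous.tendsto v).comp hconv
    have h2 : Tendsto (fun n => φ (u (σ1 (σ2 n)))) atTop (𝓝 c) :=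
      hφσ1.comp hσ2.tendsto_atTop
    exact tendsto_nhds_unique h1 h2
  have hfd : Continuous fun x : X => (1 + ‖x‖) * ‖fderiv ℝ φ x‖ := by
    have := hφ.continuous_fderiv one_ne_zero
    continuity
  have h1 : Tendsto (fun n => (1 + ‖u (σ1 (σ2 n))‖) * ‖fderiv ℝ φ (u (σ1 (σ2 n)))‖)
      atTop (𝓝 ((1 + ‖v‖) * ‖fderiv ℝ φ v‖)) := (hfd.tendsto v).comp hconv
  have h2 : Tendsto (fun n => (1 + ‖u (σ1 (σ2 n))‖) * ‖fderiv ℝ φ (u (σ1 (σ2 n)))‖)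
      atTop (𝓝 0) := hsmall.comp hσ2.tendsto_atTop
  have h0 : (1 + ‖v‖) * ‖fderiv ℝ φ v‖ = 0 := tendsto_nhds_unique h1 h2
  have hnv : ‖fderiv ℝ φ v‖ = 0 := by
    have : (0:ℝ) < 1 + ‖v‖ := by positivity
    rcases mul_eq_zero.1 h0 with h | h
    · linarith
    · exact h
  exact hnocrit v (by simpa using hnv) ⟨hφv ▸ hc.1, hφv ▸ hc.2⟩


set_option maxHeartbeats 2000000 in
lemma stmt3_descentData (φ : X → ℝ) (hφ : ContDiff ℝ 1 φ) (a b δ : ℝ) (hδ0 : 0 < δ)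
    (hδ : ∀ u : X, a ≤ φ u → φ u ≤ b → δ ≤ (1 + ‖u‖) * ‖fderiv ℝ φ u‖) :
    ∃ (V : X → X) (σ : X → ℝ), Continuous V ∧ Continuous σ ∧ (∀ u, ‖V u‖ ≤ 1) ∧
      (∀ u, 0 < σ u) ∧ (∀ u, σ u ≤ 1) ∧
      ∀ u, a ≤ φ u → φ u ≤ b → ∀ μ : ℝ, 0 ≤ μ → μ ≤ σ u →
        φ (u - μ • V u) ≤ φ u - μ * (δ / (4 * (1 + ‖u‖))) := by
  classical
  have hfdc : Continuous (fderiv ℝ φ) := hφ.continuous_fderiv one_ne_zero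
  set θ : X → ℝ := fun u => δ / (1 + ‖u‖) with hθdef
  have hθpos : ∀ u, 0 < θ u := fun u => by
    have : (0:ℝ) < 1 + ‖u‖ := by positivity
    exact div_pos hδ0 this
  set S : Set X := {u : X | a ≤ φ u ∧ φ u ≤ b} with hSdef
  have hSclosed : IsClosed S := by
    have : S = φ ⁻¹' (Icc a b) := rfl
    rw [this]
    exact (isClosed_Icc).preimage hφ.continuous
  have hθle : ∀ u ∈ S, θ u ≤ ‖fderiv ℝ φ u‖ := by
    intro u hu
    have h1 : (0:ℝ) < 1 + ‖u‖ := by positivity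
    rw [div_le_iff₀' h1]
    exact hδ u hu.1 hu.2
  -- choose direction and radius at every point
  have hex : ∀ x : X, ∃ (w : X) (s : ℝ), ‖w‖ ≤ 1 ∧ 0 < s ∧ s ≤ 1 ∧
      (x ∈ S → ∀ u ∈ ball x s,
        (3/8) * θ u ≤ fderiv ℝ φ u w ∧
        ∀ y ∈ closedBall u s, ‖fderiv ℝ φ y - fderiv ℝ φ u‖ ≤ (1/8) * θ u) := by
    intro x
    by_cases hx : x ∈ S
    · -- choose a norming direction
      have hopos : 0 < ‖fderiv ℝ φ x‖ := lt_of_lt_of_le (hθpos x) (hθle x hx)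
      obtain ⟨w0, hw0, hw0'⟩ := (fderiv ℝ φ x).exists_lt_apply_of_lt_opNorm
        (r := (7/8) * ‖fderiv ℝ φ x‖) (by nlinarith)
      set w : X := if 0 ≤ fderiv ℝ φ x w0 then w0 else -w0 with hwdef
      have hw1 : ‖w‖ ≤ 1 := by
        rw [hwdef]; split_ifs <;> simpa using hw0.le
      have hwval : (7/8) * ‖fderiv ℝ φ x‖ < fderiv ℝ φ x w := by
        rw [hwdef]; split_ifs with h
        · rwa [Real.norm_eq_abs, abs_of_nonneg h] at hw0'
        · rw [map_neg]
          rw [Real.norm_eq_abs, abs_of_neg (lt_of_not_ge h)] at hw0'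
          linarith
      -- choose radius from continuity of fderiv
      have hc : ContinuousAt (fderiv ℝ φ) x := hfdc.continuousAt
      rw [Metric.continuousAt_iff] at hc
      obtain ⟨η, hη0, hη⟩ := hc ((1/32) * θ x) (by positivity)
      refine ⟨w, min 1 (η / 3), hw1, by positivity, min_le_left _ _, ?_⟩
      intro _ u hu
      set s := min 1 (η / 3) with hsdef
      have hs1 : s ≤ 1 := min_le_left _ _
      have hspos : (0:ℝ) < s := by rw [hsdef]; positivity
      have hsη : s ≤ η / 3 := min_le_right _ _
      have hux : ‖u - x‖ < s := by rwa [mem_ball_iff_norm] at hu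
      -- oscillation of fderiv on closedBall x (2 s)
      have hosc : ∀ z : X, ‖z - x‖ ≤ 2 * s → ‖fderiv ℝ φ z - fderiv ℝ φ x‖ ≤ (1/32) * θ x := by
        intro z hz
        have : dist z x < η := by
          rw [dist_eq_norm]
          calc ‖z - x‖ ≤ 2 * s := hz
            _ ≤ 2 * (η / 3) := by linarith
            _ < η := by linarith
        have := hη this
        rw [dist_eq_norm] at this
        exact this.le
      -- compare θ x and θ u
      have hnx : ‖u‖ ≤ ‖x‖ + 1 := by
        have : ‖u‖ - ‖x‖ ≤ ‖u - x‖ := norm_sub_norm_le _ _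
        nlinarith [hux, hs1]
      have hnu : ‖x‖ ≤ ‖u‖ + 1 := by
        have : ‖x‖ - ‖u‖ ≤ ‖u - x‖ := by
          rw [← norm_neg (u - x)]; simpa using norm_sub_norm_le x u
        nlinarith [hux, hs1]
      have hpu : (0:ℝ) < 1 + ‖u‖ := by positivity
      have hpx : (0:ℝ) < 1 + ‖x‖ := by positivity
      have hθxu : θ u / 2 ≤ θ x := by
        show δ / (1 + ‖u‖) / 2 ≤ δ / (1 + ‖x‖)
        rw [div_div, div_le_div_iff₀ (by positivity) hpx]
        nlinarith [mul_le_mul_of_nonneg_left (show (1:ℝ) + ‖x‖ ≤ (1 + ‖u‖) * 2 by linarith [norm_nonneg u, norm_nonneg x]) hδ0.le]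
      have hθux : θ x ≤ 2 * θ u := by
        show δ / (1 + ‖x‖) ≤ 2 * (δ / (1 + ‖u‖))
        rw [mul_div_assoc' 2 δ, div_le_div_iff₀ hpx hpu]
        nlinarith [mul_le_mul_of_nonneg_left (show (1:ℝ) + ‖u‖ ≤ 2 * (1 + ‖x‖) by linarith [norm_nonneg u, norm_nonneg x]) hδ0.le]
      constructor
      · -- lower bound for fderiv u applied to w
        have h1 : ‖fderiv ℝ φ u - fderiv ℝ φ x‖ ≤ (1/32) * θ x :=
          hosc u (by linarith [hux.le, hspos])
        have h2 : (fderiv ℝ φ u) w ≥ (fderiv ℝ φ x) w - ‖fderiv ℝ φ u - fderiv ℝ φ x‖ := by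
          have := ((fderiv ℝ φ u - fderiv ℝ φ x).le_opNorm w)
          have hb : ‖(fderiv ℝ φ u - fderiv ℝ φ x) w‖ ≤ ‖fderiv ℝ φ u - fderiv ℝ φ x‖ := by
            calc ‖(fderiv ℝ φ u - fderiv ℝ φ x) w‖
                ≤ ‖fderiv ℝ φ u - fderiv ℝ φ x‖ * ‖w‖ := this
              _ ≤ ‖fderiv ℝ φ u - fderiv ℝ φ x‖ * 1 := by
                  exact mul_le_mul_of_nonneg_left hw1 (norm_nonneg _)
              _ = _ := mul_one _
          have hsub : (fderiv ℝ φ u) w - (fderiv ℝ φ x) w = (fderiv ℝ φ u - fderiv ℝ φ x) w := by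
            simp
          have := neg_abs_le ((fderiv ℝ φ u - fderiv ℝ φ x) w)
          rw [Real.norm_eq_abs] at hb
          nlinarith [le_abs_self ((fderiv ℝ φ u - fderiv ℝ φ x) w), hsub,
            neg_abs_le ((fderiv ℝ φ u - fderiv ℝ φ x) w)]
        have hθxl : θ x ≤ ‖fderiv ℝ φ x‖ := hθle x hx
        calc (3/8) * θ u ≤ (3/4) * θ x := by linarith
          _ ≤ (7/8) * ‖fderiv ℝ φ x‖ - (1/32) * θ x := by nlinarith [hθpos x]
          _ ≤ (fderiv ℝ φ x) w - ‖fderiv ℝ φ u - fderiv ℝ φ x‖ := by linarith [hwval, h1]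
          _ ≤ (fderiv ℝ φ u) w := h2
      · -- oscillation around u
        intro y hy
        rw [mem_closedBall, dist_eq_norm] at hy
        have h1 : ‖fderiv ℝ φ y - fderiv ℝ φ x‖ ≤ (1/32) * θ x := by
          apply hosc
          calc ‖y - x‖ ≤ ‖y - u‖ + ‖u - x‖ := norm_sub_le_norm_sub_add_norm_sub _ _ _
            _ ≤ 2 * s := by linarith [hux.le, hspos]
        have h2 : ‖fderiv ℝ φ u - fderiv ℝ φ x‖ ≤ (1/32) * θ x :=
          hosc u (by linarith [hux.le, hspos])
        calc ‖fderiv ℝ φ y - fderiv ℝ φ u‖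
            ≤ ‖fderiv ℝ φ y - fderiv ℝ φ x‖ + ‖fderiv ℝ φ x - fderiv ℝ φ u‖ :=
              norm_sub_le_norm_sub_add_norm_sub _ _ _
          _ ≤ (1/32) * θ x + (1/32) * θ x := by
              have h2' : ‖fderiv ℝ φ x - fderiv ℝ φ u‖ ≤ (1/32) * θ x := by
                rw [norm_sub_rev]; exact h2
              linarith
          _ = (1/16) * θ x := by ring
          _ ≤ (1/8) * θ u := by linarith
    · exact ⟨0, 1, by simp, one_pos, le_rfl, fun h => absurd h hx⟩
  choose w s hw1 hs0 hs1 hgood using hex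
  -- the open cover
  set U : X → Set X := fun x => if x ∈ S then ball x (s x) else Sᶜ with hUdef
  have hUS : ∀ x, x ∈ S → U x = ball x (s x) := by
    intro x hx; rw [hUdef]; simp only [if_pos hx]
  have hUnS : ∀ x, x ∉ S → U x = Sᶜ := by
    intro x hx; rw [hUdef]; simp only [if_neg hx]
  have hUopen : ∀ x, IsOpen (U x) := by
    intro x
    by_cases hx : x ∈ S
    · rw [hUS x hx]; exact isOpen_ball
    · rw [hUnS x hx]; exact hSclosed.isOpen_compl
  have hUcover : (univ : Set X) ⊆ ⋃ x, U x := by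
    intro u _
    rcases Classical.em (u ∈ S) with hu | hu
    · exact mem_iUnion.2 ⟨u, by rw [hUS u hu]; exact mem_ball_self (hs0 u)⟩
    · exact mem_iUnion.2 ⟨u, by rw [hUnS u hu]; exact hu⟩
  obtain ⟨ρ, hρ⟩ := PartitionOfUnity.exists_isSubordinate isClosed_univ U hUopen hUcover
  refine ⟨fun u => ∑ᶠ i, ρ i u • w i, fun u => ∑ᶠ i, ρ i u • s i, ?_, ?_, ?_, ?_, ?_, ?_⟩
  · exact ρ.continuous_finsum_smul fun i x _ => continuousAt_const
  · exact ρ.continuous_finsum_smul fun i x _ => continuousAt_const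
  · intro u
    have := ρ.finsum_smul_mem_convex (g := fun i _ => w i) (t := closedBall (0:X) 1)
      (mem_univ u) (fun i _ => by simpa [mem_closedBall_zero_iff] using hw1 i)
      (convex_closedBall _ _)
    simpa [mem_closedBall_zero_iff] using this
  · intro u
    have := ρ.finsum_smul_mem_convex (g := fun i _ => s i) (t := Ioc (0:ℝ) 1)
      (mem_univ u) (fun i _ => ⟨hs0 i, hs1 i⟩) (convex_Ioc 0 1)
    exact this.1
  · intro u
    have := ρ.finsum_smul_mem_convex (g := fun i _ => s i) (t := Ioc (0:ℝ) 1)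
      (mem_univ u) (fun i _ => ⟨hs0 i, hs1 i⟩) (convex_Ioc 0 1)
    exact this.2
  · intro u hua hub μ hμ0 hμσ
    have huS : u ∈ S := ⟨hua, hub⟩
    set Vu : X := ∑ᶠ i, ρ i u • w i with hVudef
    -- active indices
    have hactive : ∀ i : X, ρ i u ≠ 0 → i ∈ S ∧ u ∈ ball i (s i) := by
      intro i hi
      have hmem : u ∈ tsupport (ρ i) := subset_closure (by exact hi)
      have hUi := hρ i hmem
      rcases Classical.em (i ∈ S) with hiS | hiS
      · refine ⟨hiS, ?_⟩
        rwa [hUS i hiS] at hUi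
      · exfalso
        rw [hUnS i hiS] at hUi
        exact hUi huS
    -- a maximal active radius
    have hAne : ∃ i, 0 < ρ i u := ρ.exists_pos (mem_univ u)
    set A : Finset X := ρ.finsupport u with hAdef
    have hAnonempty : A.Nonempty := by
      obtain ⟨i, hi⟩ := hAne
      exact ⟨i, by rw [hAdef, ρ.mem_finsupport]; exact ne_of_gt hi⟩
    obtain ⟨imax, himaxA, himax⟩ := A.exists_max_image s hAnonempty
    have himax_active : ρ imax u ≠ 0 := by
      rw [hAdef, ρ.mem_finsupport] at himaxA; exact himaxA
    obtain ⟨himaxS, himaxball⟩ := hactive imax himax_active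
    -- σ u ≤ s imax
    have hσle : (∑ᶠ i, ρ i u • s i) ≤ s imax := by
      have := ρ.finsum_smul_mem_convex (g := fun i _ => s i) (t := Iic (s imax))
        (mem_univ u) (fun i hi => himax i (by rw [hAdef, ρ.mem_finsupport]; exact hi))
        (convex_Iic _)
      exact this
    -- norm bound for Vu
    have hVu1 : ‖Vu‖ ≤ 1 := by
      have := ρ.finsum_smul_mem_convex (g := fun i _ => w i) (t := closedBall (0:X) 1)
        (mem_univ u) (fun i _ => by simpa [mem_closedBall_zero_iff] using hw1 i)
        (convex_closedBall _ _)
      simpa [mem_closedBall_zero_iff, hVudef] using this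
    -- pointwise slope bound
    have hslope : (3/8) * θ u ≤ fderiv ℝ φ u Vu := by
      have hconv : Convex ℝ {v : X | (3/8) * θ u ≤ fderiv ℝ φ u v} :=
        convex_halfSpace_ge ⟨fun _ _ => map_add _ _ _, fun _ _ => map_smul _ _ _⟩ _
      exact ρ.finsum_smul_mem_convex (g := fun i _ => w i)
        (t := {v : X | (3/8) * θ u ≤ fderiv ℝ φ u v}) (mem_univ u)
        (fun i hi => ((hgood i (hactive i hi).1 u (hactive i hi).2).1)) hconv
    -- slope bound along the segment
    have hsegslope : ∀ τ : ℝ, τ ∈ Icc (0:ℝ) μ →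
        δ / (4 * (1 + ‖u‖)) ≤ fderiv ℝ φ (u - τ • Vu) Vu := by
      intro τ hτ
      have hyball : (u - τ • Vu) ∈ closedBall u (s imax) := by
        rw [mem_closedBall, dist_eq_norm]
        have : ‖u - τ • Vu - u‖ = ‖τ • Vu‖ := by
          rw [sub_sub_cancel_left, norm_neg]
        rw [this, norm_smul, Real.norm_eq_abs, abs_of_nonneg hτ.1]
        calc τ * ‖Vu‖ ≤ τ * 1 := mul_le_mul_of_nonneg_left hVu1 hτ.1
          _ = τ := mul_one τ
          _ ≤ μ := hτ.2
          _ ≤ s imax := le_trans hμσ hσle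
      have hosc : ‖fderiv ℝ φ (u - τ • Vu) - fderiv ℝ φ u‖ ≤ (1/8) * θ u :=
        (hgood imax himaxS u himaxball).2 _ hyball
      have hb : ‖(fderiv ℝ φ (u - τ • Vu) - fderiv ℝ φ u) Vu‖
          ≤ ‖fderiv ℝ φ (u - τ • Vu) - fderiv ℝ φ u‖ := by
        calc ‖(fderiv ℝ φ (u - τ • Vu) - fderiv ℝ φ u) Vu‖
            ≤ ‖fderiv ℝ φ (u - τ • Vu) - fderiv ℝ φ u‖ * ‖Vu‖ :=
              ContinuousLinearMap.le_opNorm _ _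
          _ ≤ ‖fderiv ℝ φ (u - τ • Vu) - fderiv ℝ φ u‖ * 1 :=
              mul_le_mul_of_nonneg_left hVu1 (norm_nonneg _)
          _ = _ := mul_one _
      have hsub : fderiv ℝ φ (u - τ • Vu) Vu - fderiv ℝ φ u Vu
          = (fderiv ℝ φ (u - τ • Vu) - fderiv ℝ φ u) Vu := by simp
      have habs := neg_abs_le ((fderiv ℝ φ (u - τ • Vu) - fderiv ℝ φ u) Vu)
      rw [Real.norm_eq_abs] at hb
      have hθq : δ / (4 * (1 + ‖u‖)) = (1/4) * θ u := by
        show δ / (4 * (1 + ‖u‖)) = (1/4) * (δ / (1 + ‖u‖))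
        have hne : (1 + ‖u‖) ≠ 0 := by positivity
        field_simp
      rw [hθq]
      nlinarith [hslope, hosc, hb, habs, hsub]
    -- monotonicity along the segment
    have hψ : ∀ τ : ℝ, HasDerivAt (fun r : ℝ => φ (u - r • Vu) + r * (δ / (4 * (1 + ‖u‖))))
        (fderiv ℝ φ (u - τ • Vu) (-Vu) + δ / (4 * (1 + ‖u‖))) τ := by
      intro τ
      have hc : HasDerivAt (fun r : ℝ => u - r • Vu) (-Vu) τ := by
        simpa using ((hasDerivAt_id τ).smul_const Vu).const_sub u
      have hφd : HasDerivAt (fun r : ℝ => φ (u - r • Vu)) (fderiv ℝ φ (u - τ • Vu) (-Vu)) τ :=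
        ((hφ.differentiable one_ne_zero) (u - τ • Vu)).hasFDerivAt.comp_hasDerivAt τ hc
      exact hφd.add (hasDerivAt_mul_const (δ / (4 * (1 + ‖u‖))))
    have hanti : AntitoneOn (fun r : ℝ => φ (u - r • Vu) + r * (δ / (4 * (1 + ‖u‖))))
        (Icc 0 μ) := by
      apply antitoneOn_of_deriv_nonpos (convex_Icc 0 μ)
      · apply Continuous.continuousOn
        exact (hφ.continuous.comp
          (continuous_const.sub (continuous_id.smul continuous_const))).add
          (continuous_id.mul continuous_const)
      · intro τ _
        exact (hψ τ).differentiableAt.differentiableWithinAt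
      · intro τ hτ
        rw [interior_Icc] at hτ
        rw [(hψ τ).deriv]
        have := hsegslope τ ⟨hτ.1.le, hτ.2.le⟩
        simp only [map_neg]
        linarith
    have hf := hanti (left_mem_Icc.2 hμ0) (right_mem_Icc.2 hμ0) hμ0
    simp only [zero_smul, sub_zero, zero_mul, add_zero] at hf
    linarith


set_option maxHeartbeats 2000000 in
lemma stmt3_deform (φ : X → ℝ) (hφc : Continuous φ) (a b δ : ℝ) (hab : a ≤ b)
    (hδ0 : 0 < δ) (hδ1 : δ ≤ 1)
    (V : X → X) (σ : X → ℝ) (hVc : Continuous V) (hσc : Continuous σ)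
    (hV1 : ∀ u, ‖V u‖ ≤ 1) (hσ0 : ∀ u, 0 < σ u) (hσ1 : ∀ u, σ u ≤ 1)
    (key : ∀ u, a ≤ φ u → φ u ≤ b → ∀ μ : ℝ, 0 ≤ μ → μ ≤ σ u →
      φ (u - μ • V u) ≤ φ u - μ * (δ / (4 * (1 + ‖u‖)))) :
    ∃ h : ℝ → X → X,
      ContinuousOn (fun q : ℝ × X => h q.1 q.2)
        (Set.Icc (0:ℝ) 1 ×ˢ {u : X | φ u ≤ b}) ∧
      (∀ u : X, φ u ≤ b → h 0 u = u) ∧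
      (∀ t ∈ Set.Icc (0:ℝ) 1, ∀ u : X, φ u ≤ b → φ (h t u) ≤ b) ∧
      (∀ u : X, φ u ≤ b → φ (h 1 u) ≤ a) ∧
      (∀ t ∈ Set.Icc (0:ℝ) 1, ∀ u : X, φ u ≤ a → h t u = u) := by
  classical
  haveI : Nonempty X := ⟨0⟩
  set g0 : X → ℝ := fun u => min 1 (max (φ u - a) 0) with hg0def
  set lam : X → ℝ := fun u => g0 u * σ u with hlamdef
  set F : X → X := fun u => u - lam u • V u with hFdef
  set e : X → ℝ := fun v => max (φ v - a) 0 with hedef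
  set dr : X → ℝ := fun v => lam v * (δ / (4 * (1 + ‖v‖))) with hdrdef
  set W : X → ℝ := fun v => (4 / δ) * ((1 + ‖v‖) * Real.exp ((4 / δ) * e v)) with hWdef
  -- basic positivity and continuity facts
  have hg00 : ∀ u, 0 ≤ g0 u := fun u => le_min (by norm_num) (le_max_right _ _)
  have hg01 : ∀ u, g0 u ≤ 1 := fun u => min_le_left _ _
  have he0 : ∀ u, 0 ≤ e u := fun u => le_max_right _ _
  have hg0e : ∀ u, g0 u ≤ e u := fun u => min_le_right _ _
  have hlam0 : ∀ u, 0 ≤ lam u := fun u => mul_nonneg (hg00 u) (hσ0 u).le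
  have hlamσ : ∀ u, lam u ≤ σ u := fun u => by
    calc g0 u * σ u ≤ 1 * σ u := mul_le_mul_of_nonneg_right (hg01 u) (hσ0 u).le
      _ = σ u := one_mul _
  have hlame : ∀ u, lam u ≤ e u := fun u => by
    calc g0 u * σ u ≤ g0 u * 1 := mul_le_mul_of_nonneg_left (hσ1 u) (hg00 u)
      _ = g0 u := mul_one _
      _ ≤ e u := hg0e u
  have hrate0 : ∀ u : X, 0 < δ / (4 * (1 + ‖u‖)) := fun u => by positivity
  have hrate1 : ∀ u : X, δ / (4 * (1 + ‖u‖)) ≤ 1 := fun u => by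
    rw [div_le_one (by positivity)]
    nlinarith [norm_nonneg u]
  have hdr0 : ∀ u, 0 ≤ dr u := fun u => mul_nonneg (hlam0 u) (hrate0 u).le
  have hdrlam : ∀ u, dr u ≤ lam u := fun u => by
    calc lam u * (δ / (4 * (1 + ‖u‖))) ≤ lam u * 1 :=
      mul_le_mul_of_nonneg_left (hrate1 u) (hlam0 u)
      _ = lam u := mul_one _
  have hdre : ∀ u, dr u ≤ e u := fun u => le_trans (hdrlam u) (hlame u)
  have hlamdr : ∀ u, lam u = dr u * ((4 * (1 + ‖u‖)) / δ) := fun u => by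
    rw [hdrdef]
    have h1 : (4 * (1 + ‖u‖)) ≠ 0 := by positivity
    field_simp
  have hg0c : Continuous g0 := continuous_const.min ((hφc.sub continuous_const).max continuous_const)
  have hlamc : Continuous lam := hg0c.mul hσc
  have hFc : Continuous F := continuous_id.sub (hlamc.smul hVc)
  have hec : Continuous e := (hφc.sub continuous_const).max continuous_const
  have hdrc : Continuous dr := by
    apply hlamc.mul
    have hden : Continuous fun u : X => 4 * (1 + ‖u‖) :=
      continuous_const.mul (continuous_const.add continuous_norm)
    exact continuous_const.div hden fun x => by positivity
  have hWc : Continuous W := by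
    apply continuous_const.mul
    exact (continuous_const.add continuous_norm).mul ((continuous_const.mul hec).rexp)
  have hW0 : ∀ u, 0 ≤ W u := fun u => by
    rw [hWdef]; positivity
  have hIter : ∀ k : ℕ, Continuous (fun u => F^[k] u) := by
    intro k
    induction k with
    | zero => simpa using continuous_id'
    | succ n ih =>
      have : (fun u => F^[n+1] u) = fun u => F (F^[n] u) := by
        funext u; rw [Function.iterate_succ_apply']
      rw [this]
      exact hFc.comp ih
  -- the single-step descent estimate, valid on the sublevel set
  have hstep : ∀ u, φ u ≤ b → ∀ μ : ℝ, 0 ≤ μ → μ ≤ lam u →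
      φ (u - μ • V u) ≤ φ u - μ * (δ / (4 * (1 + ‖u‖))) := by
    intro u hub μ hμ0 hμlam
    by_cases ha' : a ≤ φ u
    · exact key u ha' hub μ hμ0 (le_trans hμlam (hlamσ u))
    · have hg0z : g0 u = 0 := by
        rw [hg0def]
        simp only
        rw [max_eq_right (by linarith : φ u - a ≤ 0)]
        exact min_eq_right (by norm_num)
      have hlamz : lam u = 0 := by rw [hlamdef]; simp only; rw [hg0z, zero_mul]
      have hμz : μ = 0 := le_antisymm (hlamz ▸ hμlam) hμ0
      simp [hμz]
  have hFdrop : ∀ u, φ u ≤ b → φ (F u) ≤ φ u - dr u := by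
    intro u hub
    exact hstep u hub (lam u) (hlam0 u) le_rfl
  have hFle : ∀ u, φ u ≤ b → φ (F u) ≤ φ u := fun u hub =>
    le_trans (hFdrop u hub) (by linarith [hdr0 u])
  have hFnorm : ∀ u, ‖F u‖ ≤ ‖u‖ + lam u := by
    intro u
    calc ‖u - lam u • V u‖ ≤ ‖u‖ + ‖lam u • V u‖ := norm_sub_le _ _
      _ = ‖u‖ + lam u * ‖V u‖ := by
          rw [norm_smul, Real.norm_eq_abs, abs_of_nonneg (hlam0 u)]
      _ ≤ ‖u‖ + lam u * 1 := by
          have := mul_le_mul_of_nonneg_left (hV1 u) (hlam0 u)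
          linarith
      _ = ‖u‖ + lam u := by rw [mul_one]
  -- iterate estimates
  have hUb : ∀ u, φ u ≤ b → ∀ k, φ (F^[k] u) ≤ b := by
    intro u hub k
    induction k with
    | zero => simpa using hub
    | succ n ih =>
      rw [Function.iterate_succ_apply']
      exact le_trans (hFle _ ih) ih
  have hUdrop : ∀ u, φ u ≤ b → ∀ k, φ (F^[k+1] u) ≤ φ (F^[k] u) - dr (F^[k] u) := by
    intro u hub k
    rw [Function.iterate_succ_apply']
    exact hFdrop _ (hUb u hub k)
  have hestep : ∀ u, φ u ≤ b → ∀ k, e (F^[k+1] u) ≤ e (F^[k] u) - dr (F^[k] u) := by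
    intro u hub k
    have h1 := hUdrop u hub k
    have h2 : φ (F^[k] u) - a ≤ e (F^[k] u) := le_max_left _ _
    have h3 := hdre (F^[k] u)
    apply max_le
    · linarith
    · linarith
  have htele : ∀ u, φ u ≤ b → ∀ K L, K ≤ L →
      (∑ j ∈ Finset.Ico K L, dr (F^[j] u)) ≤ e (F^[K] u) - e (F^[L] u) := by
    intro u hub K L hKL
    induction L, hKL using Nat.le_induction with
    | base => simp
    | succ L hKL ih =>
      rw [Finset.sum_Ico_succ_top hKL]
      have := hestep u hub L
      linarith
  have hWgrow : ∀ u, φ u ≤ b → ∀ k,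
      1 + ‖F^[k] u‖ ≤ (1 + ‖u‖) * Real.exp ((4 / δ) * (e u - e (F^[k] u))) := by
    intro u hub k
    induction k with
    | zero => simp
    | succ n ih =>
      have h1 : 1 + ‖F^[n+1] u‖ ≤ (1 + ‖F^[n] u‖) * (1 + (4 / δ) * dr (F^[n] u)) := by
        have h2 : ‖F^[n+1] u‖ ≤ ‖F^[n] u‖ + lam (F^[n] u) := by
          rw [Function.iterate_succ_apply']
          exact hFnorm _
        have h3 : lam (F^[n] u) = dr (F^[n] u) * ((4 * (1 + ‖F^[n] u‖)) / δ) := hlamdr _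
        have h4 : (0:ℝ) < 1 + ‖F^[n] u‖ := by positivity
        have h5 : dr (F^[n] u) * ((4 * (1 + ‖F^[n] u‖)) / δ)
            = (1 + ‖F^[n] u‖) * ((4 / δ) * dr (F^[n] u)) := by ring
        have h3' : lam (F^[n] u) = (1 + ‖F^[n] u‖) * ((4 / δ) * dr (F^[n] u)) := by
          rw [h3]; ring
        nlinarith [h2, h3']
      have h6 : (1 + (4 / δ) * dr (F^[n] u)) ≤ Real.exp ((4 / δ) * dr (F^[n] u)) := by
        have := Real.add_one_le_exp ((4 / δ) * dr (F^[n] u))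
        linarith
      have h7 : (0:ℝ) < 1 + ‖F^[n] u‖ := by positivity
      calc 1 + ‖F^[n+1] u‖ ≤ (1 + ‖F^[n] u‖) * (1 + (4 / δ) * dr (F^[n] u)) := h1
        _ ≤ ((1 + ‖u‖) * Real.exp ((4 / δ) * (e u - e (F^[n] u)))) *
            Real.exp ((4 / δ) * dr (F^[n] u)) := by
            apply mul_le_mul ih h6 ?_ (by positivity)
            have hd := hdr0 (F^[n] u)
            have hq : (0:ℝ) ≤ 4 / δ := by positivity
            nlinarith
        _ = (1 + ‖u‖) * Real.exp ((4 / δ) * (e u - e (F^[n] u)) + (4 / δ) * dr (F^[n] u)) := by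
            rw [mul_assoc, Real.exp_add]
        _ ≤ (1 + ‖u‖) * Real.exp ((4 / δ) * (e u - e (F^[n+1] u))) := by
            apply mul_le_mul_of_nonneg_left _ (by positivity)
            apply Real.exp_le_exp.2
            have := hestep u hub n
            nlinarith [div_nonneg (by norm_num : (0:ℝ) ≤ 4) hδ0.le]
  have hWb : ∀ u, φ u ≤ b → ∀ k, (4 / δ) * (1 + ‖F^[k] u‖) ≤ W u := by
    intro u hub k
    rw [hWdef]
    have h1 := hWgrow u hub k
    have h2 : Real.exp ((4 / δ) * (e u - e (F^[k] u))) ≤ Real.exp ((4 / δ) * e u) := by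
      apply Real.exp_le_exp.2
      have := he0 (F^[k] u)
      have : (0:ℝ) ≤ 4 / δ := by positivity
      nlinarith [he0 (F^[k] u)]
    have h3 : (0:ℝ) ≤ 4 / δ := by positivity
    have h4 : (0:ℝ) < 1 + ‖u‖ := by positivity
    have h5 : 1 + ‖F^[k] u‖ ≤ (1 + ‖u‖) * Real.exp ((4 / δ) * e u) := by
      calc 1 + ‖F^[k] u‖ ≤ (1 + ‖u‖) * Real.exp ((4 / δ) * (e u - e (F^[k] u))) := h1
        _ ≤ (1 + ‖u‖) * Real.exp ((4 / δ) * e u) :=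
            mul_le_mul_of_nonneg_left h2 (by positivity)
    exact mul_le_mul_of_nonneg_left h5 h3
  have hlamW : ∀ u, φ u ≤ b → ∀ k, lam (F^[k] u) ≤ W u * dr (F^[k] u) := by
    intro u hub k
    rw [hlamdr (F^[k] u)]
    have h1 : (4 * (1 + ‖F^[k] u‖)) / δ = (4 / δ) * (1 + ‖F^[k] u‖) := by ring
    rw [h1, mul_comm (W u) (dr (F^[k] u))]
    exact mul_le_mul_of_nonneg_left (hWb u hub k) (hdr0 _)
  have hlamsum : ∀ u, φ u ≤ b → ∀ K L, K ≤ L →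
      (∑ j ∈ Finset.Ico K L, lam (F^[j] u)) ≤ W u * e (F^[K] u) := by
    intro u hub K L hKL
    calc (∑ j ∈ Finset.Ico K L, lam (F^[j] u))
        ≤ ∑ j ∈ Finset.Ico K L, W u * dr (F^[j] u) :=
          Finset.sum_le_sum fun j _ => hlamW u hub j
      _ = W u * ∑ j ∈ Finset.Ico K L, dr (F^[j] u) := by rw [Finset.mul_sum]
      _ ≤ W u * (e (F^[K] u) - e (F^[L] u)) :=
          mul_le_mul_of_nonneg_left (htele u hub K L hKL) (hW0 u)
      _ ≤ W u * e (F^[K] u) := by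
          have := he0 (F^[L] u)
          nlinarith [hW0 u]
  have hstepnorm : ∀ u (k : ℕ), ‖F^[k+1] u - F^[k] u‖ ≤ lam (F^[k] u) := by
    intro u k
    rw [Function.iterate_succ_apply']
    have : F (F^[k] u) - F^[k] u = -(lam (F^[k] u) • V (F^[k] u)) := by
      rw [hFdef]; simp
    rw [this, norm_neg, norm_smul, Real.norm_eq_abs, abs_of_nonneg (hlam0 _)]
    calc lam (F^[k] u) * ‖V (F^[k] u)‖ ≤ lam (F^[k] u) * 1 :=
        mul_le_mul_of_nonneg_left (hV1 _) (hlam0 _)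
      _ = _ := mul_one _
  have hdist : ∀ u (K L : ℕ), K ≤ L →
      ‖F^[L] u - F^[K] u‖ ≤ ∑ j ∈ Finset.Ico K L, lam (F^[j] u) := by
    intro u K L hKL
    induction L, hKL using Nat.le_induction with
    | base => simp
    | succ L hKL ih =>
      rw [Finset.sum_Ico_succ_top hKL]
      calc ‖F^[L+1] u - F^[K] u‖
          ≤ ‖F^[L+1] u - F^[L] u‖ + ‖F^[L] u - F^[K] u‖ :=
            norm_sub_le_norm_sub_add_norm_sub _ _ _
        _ ≤ _ := by
            have := hstepnorm u L
            linarith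
  have hUdist : ∀ u, φ u ≤ b → ∀ K L, K ≤ L →
      ‖F^[L] u - F^[K] u‖ ≤ W u * e (F^[K] u) := by
    intro u hub K L hKL
    exact le_trans (hdist u K L hKL) (hlamsum u hub K L hKL)
  -- summability and convergence
  have hsumdr : ∀ u, φ u ≤ b → Summable (fun k => dr (F^[k] u)) := by
    intro u hub
    apply summable_of_sum_range_le (fun k => hdr0 _)
    intro n
    calc (∑ j ∈ Finset.range n, dr (F^[j] u))
        = ∑ j ∈ Finset.Ico 0 n, dr (F^[j] u) := by rw [Finset.range_eq_Ico]
      _ ≤ e (F^[0] u) - e (F^[n] u) := htele u hub 0 n (Nat.zero_le n)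
      _ ≤ e u := by
          have := he0 (F^[n] u)
          simp only [Function.iterate_zero_apply]
          linarith
  have hcauchy : ∀ u, φ u ≤ b → CauchySeq (fun k => F^[k] u) := by
    intro u hub
    apply cauchySeq_of_summable_dist
    apply Summable.of_nonneg_of_le (fun k => dist_nonneg)
      (fun k => ?_) (((hsumdr u hub).mul_left (W u)))
    rw [dist_eq_norm, norm_sub_rev]
    exact le_trans (hstepnorm u k) (hlamW u hub k)
  set Lim : X → X := fun u => limUnder atTop (fun k => F^[k] u) with hLimdef
  have hLimT : ∀ u, φ u ≤ b → Tendsto (fun k => F^[k] u) atTop (𝓝 (Lim u)) := by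
    intro u hub
    exact (hcauchy u hub).tendsto_limUnder
  have hLima : ∀ u, φ u ≤ b → φ (Lim u) ≤ a := by
    intro u hub
    by_contra hgt
    push_neg at hgt
    have h0 : Tendsto (fun k => dr (F^[k] u)) atTop (𝓝 0) :=
      (hsumdr u hub).tendsto_atTop_zero
    have h1 : Tendsto (fun k => dr (F^[k] u)) atTop (𝓝 (dr (Lim u))) :=
      (hdrc.tendsto _).comp (hLimT u hub)
    have h2 : dr (Lim u) = 0 := tendsto_nhds_unique h1 h0
    have h3 : 0 < g0 (Lim u) := by
      rw [hg0def]
      simp only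
      apply lt_min one_pos
      apply lt_max_iff.2
      left; linarith
    have h4 : 0 < dr (Lim u) := by
      rw [hdrdef]
      exact mul_pos (mul_pos h3 (hσ0 _)) (hrate0 _)
    linarith
  have hLimdist : ∀ u, φ u ≤ b → ∀ K : ℕ, ‖Lim u - F^[K] u‖ ≤ W u * e (F^[K] u) := by
    intro u hub K
    have h1 : Tendsto (fun L => ‖F^[L] u - F^[K] u‖) atTop (𝓝 ‖Lim u - F^[K] u‖) :=
      ((hLimT u hub).sub tendsto_const_nhds).norm
    apply le_of_tendsto h1
    filter_upwards [eventually_ge_atTop K] with L hL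
    exact hUdist u hub K L hL
  -- the interpolated flow
  set G : ℝ → X → X := fun s u =>
    F^[⌊s⌋₊] u - ((s - ⌊s⌋₊) * lam (F^[⌊s⌋₊] u)) • V (F^[⌊s⌋₊] u) with hGdef
  set H : ℝ → X → X := fun t u => if t < 1 then G (t / (1 - t)) u else Lim u with hHdef
  -- frozen points
  have hfix : ∀ u, φ u ≤ a → F u = u := by
    intro u hua
    have hg0z : g0 u = 0 := by
      rw [hg0def]
      simp only
      rw [max_eq_right (by linarith : φ u - a ≤ 0)]
      exact min_eq_right (by norm_num)
    have hlamz : lam u = 0 := by rw [hlamdef]; simp only; rw [hg0z, zero_mul]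
    rw [hFdef]; simp [hlamz]
  have hfixk : ∀ u, φ u ≤ a → ∀ k : ℕ, F^[k] u = u := fun u hua k =>
    Function.iterate_fixed (hfix u hua) k
  have hGfroz : ∀ u, φ u ≤ a → ∀ s : ℝ, G s u = u := by
    intro u hua s
    have hlamz : lam u = 0 := by
      have hg0z : g0 u = 0 := by
        rw [hg0def]
        simp only
        rw [max_eq_right (by linarith : φ u - a ≤ 0)]
        exact min_eq_right (by norm_num)
      rw [hlamdef]; simp only; rw [hg0z, zero_mul]
    rw [hGdef]
    simp only [hfixk u hua]
    rw [hlamz]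
    simp
  -- value bounds for G
  have hGval : ∀ u, φ u ≤ b → ∀ s : ℝ, 0 ≤ s → φ (G s u) ≤ φ (F^[⌊s⌋₊] u) := by
    intro u hub s hs
    have hfr0 : 0 ≤ s - ⌊s⌋₊ := by
      have := Nat.floor_le hs
      linarith
    have hfr1 : s - ⌊s⌋₊ ≤ 1 := by
      have := Nat.lt_floor_add_one s
      linarith
    have hμ0 : 0 ≤ (s - ⌊s⌋₊) * lam (F^[⌊s⌋₊] u) := mul_nonneg hfr0 (hlam0 _)
    have hμlam : (s - ⌊s⌋₊) * lam (F^[⌊s⌋₊] u) ≤ lam (F^[⌊s⌋₊] u) := by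
      calc (s - ⌊s⌋₊) * lam (F^[⌊s⌋₊] u) ≤ 1 * lam (F^[⌊s⌋₊] u) :=
        mul_le_mul_of_nonneg_right hfr1 (hlam0 _)
        _ = _ := one_mul _
    have := hstep (F^[⌊s⌋₊] u) (hUb u hub ⌊s⌋₊) _ hμ0 hμlam
    calc φ (G s u) ≤ φ (F^[⌊s⌋₊] u)
        - ((s - ⌊s⌋₊) * lam (F^[⌊s⌋₊] u)) * (δ / (4 * (1 + ‖F^[⌊s⌋₊] u‖))) := this
      _ ≤ φ (F^[⌊s⌋₊] u) := by nlinarith [hμ0, hrate0 (F^[⌊s⌋₊] u)]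
  have hGb : ∀ u, φ u ≤ b → ∀ s : ℝ, 0 ≤ s → φ (G s u) ≤ b := fun u hub s hs =>
    le_trans (hGval u hub s hs) (hUb u hub _)
  -- distance bound for G beyond step K
  have hGdist : ∀ u, φ u ≤ b → ∀ (K : ℕ) (s : ℝ), 0 ≤ s → (K:ℝ) ≤ s →
      ‖G s u - F^[K] u‖ ≤ W u * e (F^[K] u) := by
    intro u hub K s hs hKs
    have hK : K ≤ ⌊s⌋₊ := Nat.le_floor hKs
    have hfr0 : 0 ≤ s - ⌊s⌋₊ := by
      have := Nat.floor_le hs; linarith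
    have hfr1 : s - ⌊s⌋₊ ≤ 1 := by
      have := Nat.lt_floor_add_one s; linarith
    have h1 : ‖G s u - F^[⌊s⌋₊] u‖ ≤ lam (F^[⌊s⌋₊] u) := by
      have : G s u - F^[⌊s⌋₊] u
          = -(((s - ⌊s⌋₊) * lam (F^[⌊s⌋₊] u)) • V (F^[⌊s⌋₊] u)) := by
        rw [hGdef]; simp
      rw [this, norm_neg, norm_smul, Real.norm_eq_abs, abs_of_nonneg (mul_nonneg hfr0 (hlam0 _))]
      calc (s - ⌊s⌋₊) * lam (F^[⌊s⌋₊] u) * ‖V (F^[⌊s⌋₊] u)‖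
          ≤ (s - ⌊s⌋₊) * lam (F^[⌊s⌋₊] u) * 1 :=
            mul_le_mul_of_nonneg_left (hV1 _) (mul_nonneg hfr0 (hlam0 _))
        _ = (s - ⌊s⌋₊) * lam (F^[⌊s⌋₊] u) := mul_one _
        _ ≤ 1 * lam (F^[⌊s⌋₊] u) := mul_le_mul_of_nonneg_right hfr1 (hlam0 _)
        _ = _ := one_mul _
    calc ‖G s u - F^[K] u‖
        ≤ ‖G s u - F^[⌊s⌋₊] u‖ + ‖F^[⌊s⌋₊] u - F^[K] u‖ :=
          norm_sub_le_norm_sub_add_norm_sub _ _ _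
      _ ≤ lam (F^[⌊s⌋₊] u) + ∑ j ∈ Finset.Ico K ⌊s⌋₊, lam (F^[j] u) := by
          have := hdist u K ⌊s⌋₊ hK
          linarith
      _ = ∑ j ∈ Finset.Ico K (⌊s⌋₊ + 1), lam (F^[j] u) := by
          rw [Finset.sum_Ico_succ_top hK]
          ring
      _ ≤ W u * e (F^[K] u) := hlamsum u hub K (⌊s⌋₊ + 1) (le_trans hK (Nat.le_succ _))
  -- the piecewise-continuous pieces
  set Gk : ℕ → ℝ × X → X := fun k p =>
    F^[k] p.2 - ((p.1 - k) * lam (F^[k] p.2)) • V (F^[k] p.2) with hGkdef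
  have hGkc : ∀ k, Continuous (Gk k) := by
    intro k
    apply Continuous.sub ((hIter k).comp continuous_snd)
    apply Continuous.smul
    · exact ((continuous_fst.sub continuous_const).mul (hlamc.comp ((hIter k).comp continuous_snd)))
    · exact hVc.comp ((hIter k).comp continuous_snd)
  have hGeq : ∀ (k : ℕ) (p : ℝ × X), (k:ℝ) ≤ p.1 → p.1 ≤ (k:ℝ) + 1 →
      G p.1 p.2 = Gk k p := by
    intro k p hk1 hk2
    rcases lt_or_eq_of_le hk2 with hlt | heq
    · have hfl : ⌊p.1⌋₊ = k := by
        rw [Nat.floor_eq_iff (le_trans (Nat.cast_nonneg k) hk1)]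
        exact ⟨hk1, by exact_mod_cast hlt⟩
      rw [hGdef, hGkdef]
      simp only [hfl]
    · have hfl : ⌊p.1⌋₊ = k + 1 := by
        rw [heq]
        rw [show ((k:ℝ) + 1) = ((k + 1 : ℕ) : ℝ) by push_cast; ring]
        exact Nat.floor_natCast _
      have hc1 : (((k + 1 : ℕ)):ℝ) = (k:ℝ) + 1 := by push_cast; ring
      rw [hGdef, hGkdef]
      simp only
      rw [hfl, hc1, heq]
      simp only [sub_self, zero_mul, zero_smul, sub_zero,
        show (k:ℝ) + 1 - (k:ℝ) = 1 by ring, one_mul, Function.iterate_succ_apply']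
      all_goals simp only [hFdef]
  have hGeq0 : ∀ (p : ℝ × X), p.1 < 1 → G p.1 p.2 = Gk 0 p := by
    intro p hp
    have hfl : ⌊p.1⌋₊ = 0 := Nat.floor_eq_zero.2 hp
    rw [hGdef, hGkdef]
    simp only [hfl]
    all_goals norm_num
  -- continuity of G on nonnegative times
  have hGcont : ∀ p : ℝ × X, 0 ≤ p.1 →
      ContinuousWithinAt (fun q : ℝ × X => G q.1 q.2) (Ici (0:ℝ) ×ˢ (univ : Set X)) p := by
    intro p hp
    by_cases h1 : p.1 < 1
    · apply ContinuousAt.continuousWithinAt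
      apply ((hGkc 0).continuousAt).congr
      have hnb : {q : ℝ × X | q.1 < 1} ∈ 𝓝 p :=
        (isOpen_lt continuous_fst continuous_const).mem_nhds h1
      filter_upwards [hnb] with q hq
      exact (hGeq0 q hq).symm
    · push_neg at h1
      set k := ⌊p.1⌋₊ with hkdef
      have hk1 : 1 ≤ k := Nat.le_floor (by exact_mod_cast h1)
      have hkle : (k:ℝ) ≤ p.1 := Nat.floor_le hp
      have hklt : p.1 < (k:ℝ) + 1 := Nat.lt_floor_add_one _
      by_cases hint : (k:ℝ) = p.1
      · -- integer time: glue two pieces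
        have hcast : ((k:ℝ) - 1) = ((k - 1 : ℕ) : ℝ) := by
          have : ((k - 1 : ℕ) : ℝ) = (k:ℝ) - 1 := by
            push_cast [Nat.cast_sub hk1]
            ring
          linarith [this]
        have hpA : p ∈ Icc ((k:ℝ) - 1) (k:ℝ) ×ˢ (univ : Set X) := by
          refine ⟨⟨?_, ?_⟩, trivial⟩ <;> rw [← hint] <;> linarith
        have hA : ContinuousWithinAt (fun q : ℝ × X => G q.1 q.2)
            (Icc ((k:ℝ) - 1) (k:ℝ) ×ˢ (univ : Set X)) p := by
          apply ContinuousOn.continuousWithinAt _ hpA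
          apply ContinuousOn.congr ((hGkc (k-1)).continuousOn)
          intro q hq
          obtain ⟨⟨hq1, hq2⟩, -⟩ := hq
          apply hGeq (k-1) q
          · rw [← hcast]; linarith
          · rw [← hcast]
            have : ((k:ℝ) - 1) + 1 = (k:ℝ) := by ring
            linarith
        have hpB : p ∈ Icc (k:ℝ) ((k:ℝ) + 1) ×ˢ (univ : Set X) := by
          refine ⟨⟨?_, ?_⟩, trivial⟩ <;> rw [← hint] <;> linarith
        have hB : ContinuousWithinAt (fun q : ℝ × X => G q.1 q.2)
            (Icc (k:ℝ) ((k:ℝ) + 1) ×ˢ (univ : Set X)) p := by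
          apply ContinuousOn.continuousWithinAt _ hpB
          apply ContinuousOn.congr ((hGkc k).continuousOn)
          intro q hq
          obtain ⟨⟨hq1, hq2⟩, -⟩ := hq
          exact hGeq k q hq1 hq2
        have hun := hA.union hB
        apply hun.mono_of_mem_nhdsWithin
        apply mem_nhdsWithin.2
        refine ⟨Ioo ((k:ℝ) - 1) ((k:ℝ) + 1) ×ˢ (univ : Set X),
          (isOpen_Ioo.prod isOpen_univ), ?_, ?_⟩
        · exact ⟨⟨by linarith, by linarith⟩, trivial⟩
        · rintro q ⟨⟨hq1, hq2⟩, -⟩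
          rcases le_or_gt q.1 (k:ℝ) with hqk | hqk
          · exact Or.inl ⟨⟨hq1.1.le, hqk⟩, trivial⟩
          · exact Or.inr ⟨⟨hqk.le, hq1.2.le⟩, trivial⟩
      · -- non-integer time
        have hklt' : (k:ℝ) < p.1 := lt_of_le_of_ne hkle hint
        apply ContinuousAt.continuousWithinAt
        apply ((hGkc k).continuousAt).congr
        have hnb : (Ioo (k:ℝ) ((k:ℝ)+1) ×ˢ (univ : Set X)) ∈ 𝓝 p :=
          (isOpen_Ioo.prod isOpen_univ).mem_nhds ⟨⟨hklt', hklt⟩, trivial⟩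
        filter_upwards [hnb] with q hq
        exact (hGeq k q hq.1.1.le hq.1.2.le).symm
  have hG0 : ∀ u, G 0 u = u := by
    intro u
    rw [hGdef]
    simp
  -- assemble
  refine ⟨H, ?_, ?_, ?_, ?_, ?_⟩
  · -- continuity
    intro p hp
    have hpt : p.1 ∈ Icc (0:ℝ) 1 := hp.1
    have hpb : φ p.2 ≤ b := hp.2
    rcases lt_or_eq_of_le hpt.2 with hlt | heq
    · -- t < 1
      have hΨ : ContinuousAt (fun q : ℝ × X => ((q.1 / (1 - q.1), q.2) : ℝ × X)) p := by
        apply ContinuousAt.prodMk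
        · exact continuousAt_fst.div (continuousAt_const.sub continuousAt_fst)
            (by simp only [sub_ne_zero]; exact fun h => absurd h.symm (ne_of_lt hlt))
        · exact continuousAt_snd
      have hmaps : MapsTo (fun q : ℝ × X => ((q.1 / (1 - q.1), q.2) : ℝ × X))
          (Icc (0:ℝ) 1 ×ˢ {u : X | φ u ≤ b}) (Ici (0:ℝ) ×ˢ (univ : Set X)) := by
        rintro q ⟨⟨hq0, hq1⟩, -⟩
        rcases eq_or_lt_of_le hq1 with h | h
        · refine ⟨?_, trivial⟩
          show (0:ℝ) ≤ q.1 / (1 - q.1)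
          rw [← h]
          simp
        · exact ⟨div_nonneg hq0 (by linarith), trivial⟩
      have hGc := hGcont (p.1 / (1 - p.1), p.2)
        (div_nonneg hpt.1 (by linarith))
      have hcomp : ContinuousWithinAt
          (fun q : ℝ × X => G (q.1 / (1 - q.1)) q.2)
          (Icc (0:ℝ) 1 ×ˢ {u : X | φ u ≤ b}) p :=
        ContinuousWithinAt.comp (g := fun q : ℝ × X => G q.1 q.2)
          (f := fun q : ℝ × X => ((q.1 / (1 - q.1), q.2) : ℝ × X))
          hGc hΨ.continuousWithinAt hmaps
      apply ContinuousWithinAt.congr_of_eventuallyEq hcomp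
      · have hnb : {q : ℝ × X | q.1 < 1} ∈ 𝓝 p :=
          (isOpen_lt continuous_fst continuous_const).mem_nhds hlt
        filter_upwards [nhdsWithin_le_nhds hnb] with q hq
        simp only [hHdef, if_pos hq]
      · simp only [hHdef, if_pos hlt]
    · -- t = 1
      rw [Metric.continuousWithinAt_iff]
      intro ε hε
      have hub0 : φ p.2 ≤ b := hpb
      have hTend : Tendsto (fun K : ℕ => W p.2 * e (F^[K] p.2)) atTop (𝓝 0) := by
        have h1 : Tendsto (fun K : ℕ => e (F^[K] p.2)) atTop (𝓝 (e (Lim p.2))) :=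
          (hec.tendsto _).comp (hLimT p.2 hub0)
        have h2 : e (Lim p.2) = 0 := by
          rw [hedef]
          simp only
          rw [max_eq_right (by linarith [hLima p.2 hub0])]
        rw [h2] at h1
        simpa using h1.const_mul (W p.2)
      obtain ⟨K, hK⟩ :=
        (hTend.eventually (Iio_mem_nhds (show (0:ℝ) < ε/8 by positivity))).exists
      have hKlt : W p.2 * e (F^[K] p.2) < ε/8 := hK
      -- neighborhood in X
      have hNopen : IsOpen {v : X | W v * e (F^[K] v) < ε/8 ∧ ‖F^[K] v - F^[K] p.2‖ < ε/8} := by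
        apply IsOpen.inter
        · exact isOpen_lt (hWc.mul (hec.comp (hIter K))) continuous_const
        · exact isOpen_lt (((hIter K).sub continuous_const).norm) continuous_const
      have hQopen : IsOpen ((Ioi ((K:ℝ)/(K+1)) ×ˢ
          {v : X | W v * e (F^[K] v) < ε/8 ∧ ‖F^[K] v - F^[K] p.2‖ < ε/8}) : Set (ℝ × X)) :=
        isOpen_Ioi.prod hNopen
      have hpQ : p ∈ Ioi ((K:ℝ)/(K+1)) ×ˢ
          {v : X | W v * e (F^[K] v) < ε/8 ∧ ‖F^[K] v - F^[K] p.2‖ < ε/8} := by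
        refine ⟨?_, hKlt, ?_⟩
        · show (K:ℝ)/(K+1) < p.1
          rw [heq, div_lt_one (by positivity)]
          linarith
        · rw [sub_self, norm_zero]
          positivity
      obtain ⟨r, hr0, hball⟩ := Metric.mem_nhds_iff.1 (hQopen.mem_nhds hpQ)
      refine ⟨r, hr0, ?_⟩
      intro q hq hdq
      have hqQ := hball hdq
      have hqt : (K:ℝ)/(K+1) < q.1 := hqQ.1
      have hqN1 : W q.2 * e (F^[K] q.2) < ε/8 := hqQ.2.1
      have hqN2 : ‖F^[K] q.2 - F^[K] p.2‖ < ε/8 := hqQ.2.2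
      have hqt01 : q.1 ∈ Icc (0:ℝ) 1 := hq.1
      have hqb : φ q.2 ≤ b := hq.2
      have hHp : H p.1 p.2 = Lim p.2 := by
        simp only [hHdef]
        rw [if_neg (by rw [heq]; exact lt_irrefl 1)]
      rw [hHp, dist_eq_norm]
      have hLimp : ‖F^[K] p.2 - Lim p.2‖ ≤ W p.2 * e (F^[K] p.2) := by
        rw [norm_sub_rev]
        exact hLimdist p.2 hub0 K
      by_cases hql : q.1 < 1
      · have h1q : (0:ℝ) < 1 - q.1 := by linarith
        have hs0 : 0 ≤ q.1 / (1 - q.1) := div_nonneg hqt01.1 h1q.le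
        have hsK : (K:ℝ) ≤ q.1 / (1 - q.1) := by
          rw [le_div_iff₀ h1q]
          rw [div_lt_iff₀ (by positivity : (0:ℝ) < (K:ℝ)+1)] at hqt
          nlinarith
        have hHq : H q.1 q.2 = G (q.1 / (1 - q.1)) q.2 := by
          simp only [hHdef, if_pos hql]
        rw [hHq]
        have hb1 : ‖G (q.1 / (1 - q.1)) q.2 - F^[K] q.2‖ ≤ W q.2 * e (F^[K] q.2) :=
          hGdist q.2 hqb K _ hs0 hsK
        calc ‖G (q.1 / (1 - q.1)) q.2 - Lim p.2‖
            ≤ ‖G (q.1 / (1 - q.1)) q.2 - F^[K] q.2‖ + ‖F^[K] q.2 - Lim p.2‖ :=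
              norm_sub_le_norm_sub_add_norm_sub _ _ _
          _ ≤ ‖G (q.1 / (1 - q.1)) q.2 - F^[K] q.2‖ + (‖F^[K] q.2 - F^[K] p.2‖
              + ‖F^[K] p.2 - Lim p.2‖) := by
              linarith [norm_sub_le_norm_sub_add_norm_sub (F^[K] q.2) (F^[K] p.2) (Lim p.2)]
          _ < ε := by linarith [hb1, hqN1, hqN2, hLimp, hKlt]
      · have hHq : H q.1 q.2 = Lim q.2 := by simp only [hHdef, if_neg hql]
        rw [hHq]
        have hb1 : ‖Lim q.2 - F^[K] q.2‖ ≤ W q.2 * e (F^[K] q.2) := hLimdist q.2 hqb K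
        calc ‖Lim q.2 - Lim p.2‖
            ≤ ‖Lim q.2 - F^[K] q.2‖ + ‖F^[K] q.2 - Lim p.2‖ :=
              norm_sub_le_norm_sub_add_norm_sub _ _ _
          _ ≤ ‖Lim q.2 - F^[K] q.2‖ + (‖F^[K] q.2 - F^[K] p.2‖
              + ‖F^[K] p.2 - Lim p.2‖) := by
              linarith [norm_sub_le_norm_sub_add_norm_sub (F^[K] q.2) (F^[K] p.2) (Lim p.2)]
          _ < ε := by linarith [hb1, hqN1, hqN2, hLimp, hKlt]
  · -- h 0 u = u
    intro u hub
    simp only [hHdef, if_pos one_pos]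
    rw [show (0:ℝ) / (1 - 0) = 0 by norm_num]
    exact hG0 u
  · -- stays in sublevel b
    intro t ht u hub
    by_cases htl : t < 1
    · simp only [hHdef, if_pos htl]
      exact hGb u hub _ (div_nonneg ht.1 (by linarith [htl]))
    · simp only [hHdef, if_neg htl]
      exact le_trans (hLima u hub) hab
  · -- h 1 u in sublevel a
    intro u hub
    simp only [hHdef, if_neg (lt_irrefl (1:ℝ))]
    exact hLima u hub
  · -- fixes sublevel a
    intro t ht u hua
    by_cases htl : t < 1
    · simp only [hHdef, if_pos htl]
      exact hGfroz u hua _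
    · simp only [hHdef, if_neg htl]
      show limUnder atTop (fun k => F^[k] u) = u
      have hcst : (fun k : ℕ => F^[k] u) = fun _ => u := funext (hfixk u hua)
      rw [hcst]
      exact Filter.Tendsto.limUnder_eq tendsto_const_nhds


end Stmt3Aux


/-- The noncritical interval theorem: if `φ` satisfies the Cerami condition at every
level `c ∈ [a,b]` and has no critical points with values in `[a,b]`, then the sublevel
set `φ^a` is a strong deformation retract of `φ^b`. -/
theorem stmt3 {X : Type*} [NormedAddCommGroup X] [NormedSpace ℝ X] [CompleteSpace X]
    (φ : X → ℝ) (hφ : ContDiff ℝ 1 φ) (a b : ℝ) (hab : a ≤ b)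
    (hCerami : ∀ c : ℝ, a ≤ c → c ≤ b → ∀ u : ℕ → X,
      Tendsto (fun n => φ (u n)) atTop (𝓝 c) →
      Tendsto (fun n => (1 + ‖u n‖) * ‖fderiv ℝ φ (u n)‖) atTop (𝓝 0) →
      ∃ (v : X) (σ : ℕ → ℕ), StrictMono σ ∧ Tendsto (fun n => u (σ n)) atTop (𝓝 v))
    (hnocrit : ∀ u : X, fderiv ℝ φ u = 0 → ¬(a ≤ φ u ∧ φ u ≤ b)) :
    ∃ h : ℝ → X → X,
      ContinuousOn (fun q : ℝ × X => h q.1 q.2)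
        (Set.Icc (0:ℝ) 1 ×ˢ {u : X | φ u ≤ b}) ∧
      (∀ u : X, φ u ≤ b → h 0 u = u) ∧
      (∀ t ∈ Set.Icc (0:ℝ) 1, ∀ u : X, φ u ≤ b → φ (h t u) ≤ b) ∧
      (∀ u : X, φ u ≤ b → φ (h 1 u) ≤ a) ∧
      (∀ t ∈ Set.Icc (0:ℝ) 1, ∀ u : X, φ u ≤ a → h t u = u) := by
  obtain ⟨δ, hδ0, hδ1, hδ⟩ := stmt3_deltaBound φ hφ a b hCerami hnocrit
  obtain ⟨V, σ, hVc, hσc, hV1, hσ0, hσ1, key⟩ := stmt3_descentData φ hφ a b δ hδ0 hδ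
  exact stmt3_deform φ hφ.continuous a b δ hab hδ0 hδ1 V σ hVc hσc hV1 hσ0 hσ1 key
end
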